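/- Let X ⊆ ℝⁿ be connected by rectangular, oriented paths, G : X → ℝʳ, and let D be an r × n matrix of intervals of ℝ. Then G is Q(D)-affine if and only if G is component-wise D-affine. -/

import Mathlib

/-- The qualitative class `Q(D)` of a matrix `D` of subsets of `ℝ`. -/
def Qual {n r : ℕ} (D : Matrix (Fin r) (Fin n) (Set ℝ)) : Set (Matrix (Fin r) (Fin n) ℝ) :=
  {B | ∀ i j, B i j ∈ D i j}

/-- `G : X → ℝʳ` is `ℬ`-affine. -/
def IsAffine {n r : ℕ} (X : Set (Fin n → ℝ)) (ℬ : Set (Matrix (Fin r) (Fin n) ℝ))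
    (G : (Fin n → ℝ) → (Fin r → ℝ)) : Prop :=
  ∀ x ∈ X, ∀ y ∈ X, ∃ B ∈ ℬ, G x - G y = B.mulVec (x - y)

/-- `G : X → ℝʳ` is component-wise `D`-affine. -/
def CompAffine {n r : ℕ} (X : Set (Fin n → ℝ)) (D : Matrix (Fin r) (Fin n) (Set ℝ))
    (G : (Fin n → ℝ) → (Fin r → ℝ)) : Prop :=
  ∀ i j, ∀ x ∈ X, ∀ y ∈ X, (∀ j', j' ≠ j → x j' = y j') →
    ∃ b ∈ D i j, G x i - G y i = b * (x j - y j)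

/-- `X` is connected by rectangular, oriented paths: any `x, y ∈ X` are joined by a finite
sequence in `X` starting at `y` and ending at `x` whose successive elements differ in
exactly one component and whose successive differences have componentwise sign `≤` the
sign of `x - y` (with `0 < -` and `0 < +`). -/
def RectOrientedConnected {n : ℕ} (X : Set (Fin n → ℝ)) : Prop :=
  ∀ x ∈ X, ∀ y ∈ X, ∃ N : ℕ, ∃ z : Fin (N + 1) → (Fin n → ℝ),
    z 0 = y ∧ z (Fin.last N) = x ∧ (∀ k, z k ∈ X) ∧
    (∀ k : Fin N, ∃ j, z k.succ j ≠ z k.castSucc j ∧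
      ∀ j', j' ≠ j → z k.succ j' = z k.castSucc j') ∧
    (∀ k : Fin N, ∀ j, z k.succ j - z k.castSucc j = 0 ∨
      SignType.sign (z k.succ j - z k.castSucc j) = SignType.sign (x j - y j))

/-- Telescoping sum over `Fin`. -/
theorem telAux {M : Type*} [AddCommGroup M] (N : ℕ) (g : Fin (N+1) → M) :
    ∑ k : Fin N, (g k.succ - g k.castSucc) = g (Fin.last N) - g 0 := by
  induction N with
  | zero => simp
  | succ N ih =>
    rw [Fin.sum_univ_castSucc]
    have h := ih (fun m => g m.castSucc)
    simp only [← Fin.succ_castSucc] at h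
    rw [h]
    simp [Fin.succ_last]

/-- On a domain connected by rectangular, oriented paths, for a matrix `D` of intervals
(convex subsets of `ℝ`), `G` is `Q(D)`-affine iff `G` is component-wise `D`-affine. -/
theorem stmt9 {n r : ℕ} (X : Set (Fin n → ℝ)) (hX : RectOrientedConnected X)
    (G : (Fin n → ℝ) → (Fin r → ℝ)) (D : Matrix (Fin r) (Fin n) (Set ℝ))
    (hD : ∀ i j, Convex ℝ (D i j)) :
    IsAffine X (Qual D) G ↔ CompAffine X D G := by
  classical
  constructor
  · -- easy direction
    intro h i j x hx y hy hxy
    obtain ⟨B, hB, hGB⟩ := h x hx y hy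
    refine ⟨B i j, hB i j, ?_⟩
    have h1 : G x i - G y i = ∑ j', B i j' * (x j' - y j') :=
      (congrFun hGB i).trans rfl
    rw [h1, Finset.sum_eq_single j]
    · intro j' _ hj'
      rw [hxy j' hj']; ring
    · intro hj; exact absurd (Finset.mem_univ j) hj
  · -- hard direction
    intro h x hx y hy
    obtain ⟨N, z, hz0, hzN, hzX, hdiff, hsign⟩ := hX x hx y hy
    -- default elements of each D i j
    choose b0 hb0 _ using fun i j => h i j x hx x hx (fun _ _ => rfl)
    -- the component changed at each step
    choose jk hjk1 hjk2 using hdiff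
    -- the step coefficients
    choose bf hbfmem hbfeq using fun i (k : Fin N) =>
      h i (jk k) (z k.succ) (hzX _) (z k.castSucc) (hzX _) (hjk2 k)
    set Δ : Fin N → Fin n → ℝ := fun k j => z k.succ j - z k.castSucc j with hΔdef
    have hΔ0 : ∀ (k : Fin N) (j : Fin n), j ≠ jk k → Δ k j = 0 := by
      intro k j hj
      simp [hΔdef, hjk2 k j hj]
    have hzero : ∀ j, x j = y j → ∀ k, Δ k j = 0 := by
      intro j hj k
      rcases hsign k j with h0 | hs
      · exact h0
      · rw [hj, sub_self, sign_zero] at hs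
        exact sign_eq_zero_iff.mp hs
    have htel : ∀ j, ∑ k : Fin N, Δ k j = x j - y j := by
      intro j
      have := telAux N (fun m => z m j)
      simpa [hΔdef, hzN, hz0] using this
    have hnneg : ∀ j, x j ≠ y j → ∀ k, 0 ≤ Δ k j / (x j - y j) := by
      intro j hj k
      rcases hsign k j with h0 | hs
      · simp [hΔdef, h0]
      rcases lt_or_gt_of_ne (sub_ne_zero.mpr hj) with hlt | hgt
      · have h1 : SignType.sign (x j - y j) = -1 := sign_eq_neg_one_iff.mpr hlt
        exact div_nonneg_of_nonpos (sign_eq_neg_one_iff.mp (hs.trans h1)).le hlt.le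
      · have h1 : SignType.sign (x j - y j) = 1 := sign_eq_one_iff.mpr hgt
        exact div_nonneg (sign_eq_one_iff.mp (hs.trans h1)).le hgt.le
    refine ⟨fun i j => if x j = y j then b0 i j
      else (∑ k : Fin N, bf i k * Δ k j) / (x j - y j), ?_, ?_⟩
    · -- membership in Q(D)
      intro i j
      by_cases hj : x j = y j
      · simpa [hj] using hb0 i j
      · simp only [hj, if_false]
        have hc : x j - y j ≠ 0 := sub_ne_zero.mpr hj
        have hmem : ∑ k : Fin N, (Δ k j / (x j - y j)) •
            (if Δ k j = 0 then b0 i j else bf i k) ∈ D i j := by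
          refine (hD i j).sum_mem (fun k _ => hnneg j hj k) ?_ ?_
          · rw [← Finset.sum_div, htel j, div_self hc]
          · intro k _
            by_cases hk : Δ k j = 0
            · simpa [hk] using hb0 i j
            · have hjk : j = jk k := by
                by_contra hne
                exact hk (hΔ0 k j hne)
              subst hjk
              rw [if_neg hk]
              exact hbfmem i k
        convert hmem using 1
        rw [Finset.sum_div]
        refine Finset.sum_congr rfl (fun k _ => ?_)
        by_cases hk : Δ k j = 0
        · simp [hk]
        · simp only [hk, if_false, smul_eq_mul]
          ring
    · -- the affine identity
      funext i
      have hrhs : ∀ v : Fin n → ℝ, ∀ B : Matrix (Fin r) (Fin n) ℝ,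
          B.mulVec v i = ∑ j, B i j * v j := fun _ _ => rfl
      show G x i - G y i = _
      refine Eq.trans ?_ (hrhs _ _).symm
      beta_reduce
      have hterm : ∀ j : Fin n,
          (if x j = y j then b0 i j
            else (∑ k : Fin N, bf i k * Δ k j) / (x j - y j)) * ((x - y) j)
          = ∑ k : Fin N, bf i k * Δ k j := by
        intro j
        by_cases hj : x j = y j
        · have : ∀ k : Fin N, bf i k * Δ k j = 0 := fun k => by
            rw [hzero j hj k, mul_zero]
          simp [hj, Pi.sub_apply, this]
        · have hc : x j - y j ≠ 0 := sub_ne_zero.mpr hj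
          simp only [hj, if_false, Pi.sub_apply]
          rw [div_mul_cancel₀ _ hc]
      rw [Finset.sum_congr rfl (fun j _ => hterm j), Finset.sum_comm]
      have hk : ∀ k : Fin N, ∑ j, bf i k * Δ k j
          = G (z k.succ) i - G (z k.castSucc) i := by
        intro k
        rw [Finset.sum_eq_single (jk k)]
        · exact (hbfeq i k).symm
        · intro j _ hj
          rw [hΔ0 k j hj, mul_zero]
        · intro hj; exact absurd (Finset.mem_univ _) hj
      rw [Finset.sum_congr rfl (fun k _ => hk k)]
      have := telAux N (fun m => G (z m) i)
      rw [this, hzN, hz0]
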